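/- Let Z ∈ ℝ^{N×M}, K = Z Zᵀ, and let {v_j}_{j∈S} be an orthonormal family in ℝ^N with K v_j = λ_j v_j and λ_j > 0, such that the vectors {Zᵀ v_j}_{j∈S} span the row space of Z (the span of the training feature vectors). Set u_j = λ_j^{−1/2} Zᵀ v_j. Let Q ⊆ S index the retained principal components. Then for any w ∈ ℝ^M lying in the row space of Z, with kernel vector k_w = Z w, the squared reconstruction error of w with respect to the subspace spanned by {u_j}_{j∈Q} equals the kernel-evaluated norm of the projection onto the residual components: ‖w − Σ_{j∈Q} ⟨u_j, w⟩ u_j‖₂² = Σ_{j∈S∖Q} (v_jᵀ k_w)² / λ_j. -/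

import Mathlib

open Matrix

lemma dot_sum_right {n : Type*} [Fintype n] {ι : Type*} (s : Finset ι)
    (x : n → ℝ) (f : ι → n → ℝ) :
    x ⬝ᵥ (∑ j ∈ s, f j) = ∑ j ∈ s, x ⬝ᵥ f j := by
  simp [dotProduct, Finset.mul_sum]
  rw [Finset.sum_comm]

lemma sum_dot_left {n : Type*} [Fintype n] {ι : Type*} (s : Finset ι)
    (x : n → ℝ) (f : ι → n → ℝ) :
    (∑ j ∈ s, f j) ⬝ᵥ x = ∑ j ∈ s, f j ⬝ᵥ x := by
  simp [dotProduct, Finset.sum_mul]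
  rw [Finset.sum_comm]

/-- Given `K = Z Zᵀ` and an orthonormal family `{v_j}_{j∈S}` of eigenvectors
with positive eigenvalues such that `{Zᵀ v_j}` spans the row space of `Z`, with
`u_j = λ_j^{-1/2} Zᵀ v_j`, for any `w` in the row space of `Z` with kernel vector
`k_w = Z w` and any retained subset `Q ⊆ S`:
`‖w − Σ_{j∈Q} ⟨u_j, w⟩ u_j‖₂² = Σ_{j∈S∖Q} (v_jᵀ k_w)² / λ_j`. -/
theorem stmt_7 (N M : ℕ) (Z : Matrix (Fin N) (Fin M) ℝ)
    (K : Matrix (Fin N) (Fin N) ℝ) (hK : K = Z * Zᵀ)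
    (ι : Type*) [Fintype ι] [DecidableEq ι]
    (v : ι → (Fin N → ℝ)) (lam : ι → ℝ)
    (hlam : ∀ j, 0 < lam j)
    (heig : ∀ j, K.mulVec (v j) = lam j • v j)
    (horth : ∀ i j, v i ⬝ᵥ v j = if i = j then (1 : ℝ) else 0)
    (hspan : Submodule.span ℝ (Set.range fun j => Zᵀ.mulVec (v j)) =
      Submodule.span ℝ (Set.range fun i => Z i))
    (u : ι → (Fin M → ℝ))
    (hu : ∀ j, u j = (Real.sqrt (lam j))⁻¹ • Zᵀ.mulVec (v j))
    (Q : Finset ι)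
    (w : Fin M → ℝ) (hw : w ∈ Submodule.span ℝ (Set.range fun i => Z i))
    (kw : Fin N → ℝ) (hkw : kw = Z.mulVec w) :
    ‖(WithLp.equiv 2 (Fin M → ℝ)).symm (w - ∑ j ∈ Q, (u j ⬝ᵥ w) • u j)‖ ^ 2 =
      ∑ j ∈ Qᶜ, (v j ⬝ᵥ kw) ^ 2 / lam j := by
  have hsqrt : ∀ j, Real.sqrt (lam j) ≠ 0 := fun j =>
    ne_of_gt (Real.sqrt_pos.mpr (hlam j))
  -- basic dot product transfer
  have hdotZT : ∀ (x : Fin N → ℝ) (y : Fin M → ℝ),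
      Zᵀ.mulVec x ⬝ᵥ y = x ⬝ᵥ Z.mulVec y := fun x y => by
    rw [Matrix.mulVec_transpose, Matrix.dotProduct_mulVec]
  -- Gram structure of the Zᵀ v vectors
  have hZv : ∀ i j, Zᵀ.mulVec (v i) ⬝ᵥ Zᵀ.mulVec (v j)
      = lam j * (if i = j then (1:ℝ) else 0) := by
    intro i j
    rw [hdotZT, Matrix.mulVec_mulVec, ← hK, heig j, dotProduct_smul,
      horth, smul_eq_mul]
  -- orthonormality of u
  have huu : ∀ i j, u i ⬝ᵥ u j = if i = j then (1:ℝ) else 0 := by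
    intro i j
    rw [hu, hu, smul_dotProduct, dotProduct_smul, hZv]
    by_cases h : i = j
    · subst h
      simp only [if_pos rfl, mul_one, smul_eq_mul, ← mul_assoc, ← mul_inv]
      rw [Real.mul_self_sqrt (hlam i).le, inv_mul_cancel₀ (ne_of_gt (hlam i))]
      simp
    · simp [h]
  -- coefficient formula
  have hc : ∀ j, u j ⬝ᵥ w = (Real.sqrt (lam j))⁻¹ * (v j ⬝ᵥ kw) := by
    intro j
    rw [hu, smul_dotProduct, hdotZT, hkw, smul_eq_mul]
  -- w lies in the span of the u's
  have hwu : w ∈ Submodule.span ℝ (Set.range u) := by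
    rw [← hspan] at hw
    refine Submodule.span_le.mpr ?_ hw
    rintro _ ⟨j, rfl⟩
    have h1 : Zᵀ.mulVec (v j) = Real.sqrt (lam j) • u j := by
      rw [hu, smul_smul, mul_inv_cancel₀ (hsqrt j), one_smul]
    show Zᵀ.mulVec (v j) ∈ (Submodule.span ℝ (Set.range u) : Set (Fin M → ℝ))
    rw [h1]
    exact Submodule.smul_mem _ _ (Submodule.subset_span ⟨j, rfl⟩)
  obtain ⟨c, hcw⟩ := (Submodule.mem_span_range_iff_exists_fun ℝ).mp hwu
  -- the coefficients are recovered by dot products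
  have hck : ∀ k, u k ⬝ᵥ w = c k := by
    intro k
    rw [← hcw, dot_sum_right]
    simp only [dotProduct_smul, huu, smul_eq_mul]
    simp
  -- residual expression
  have hrepr : ∑ j, (u j ⬝ᵥ w) • u j = w := by
    calc ∑ j, (u j ⬝ᵥ w) • u j = ∑ j, c j • u j :=
          Finset.sum_congr rfl fun j _ => by rw [hck]
      _ = w := hcw
  have hres : w - ∑ j ∈ Q, (u j ⬝ᵥ w) • u j = ∑ j ∈ Qᶜ, (u j ⬝ᵥ w) • u j := by
    rw [sub_eq_iff_eq_add', Finset.sum_add_sum_compl]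
    exact hrepr.symm
  rw [hres]
  set x : Fin M → ℝ := ∑ j ∈ Qᶜ, (u j ⬝ᵥ w) • u j with hx
  have hnorm : ‖(WithLp.equiv 2 (Fin M → ℝ)).symm x‖ ^ 2 = x ⬝ᵥ x := by
    rw [EuclideanSpace.norm_eq, Real.sq_sqrt (by positivity)]
    simp [dotProduct, Real.norm_eq_abs, sq_abs, pow_two, WithLp.equiv_symm_apply, PiLp.toLp_apply]
  rw [hnorm]
  have hxx : x ⬝ᵥ x = ∑ j ∈ Qᶜ, (u j ⬝ᵥ w) ^ 2 := by
    rw [hx, sum_dot_left]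
    refine Finset.sum_congr rfl fun i hi => ?_
    rw [smul_dotProduct, dot_sum_right]
    simp only [dotProduct_smul, huu, smul_eq_mul, mul_ite, mul_one, mul_zero]
    rw [Finset.sum_ite_eq Qᶜ i, if_pos hi, ← pow_two]
  rw [hxx]
  refine Finset.sum_congr rfl fun j _ => ?_
  rw [hc, mul_pow, ← Real.sqrt_inv, Real.sq_sqrt (inv_nonneg.mpr (hlam j).le), div_eq_mul_inv, mul_comm]
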